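/- Let G be a group and ρ : G → GL_N(F_{q²}) an absolutely irreducible representation such that ε ∘ ρ* is isomorphic to ρ, where ρ* is the contragredient (dual) representation and ε is the order-2 field automorphism of F_{q²} over F_q, applied entrywise. Then there exists P ∈ GL_N(F_{q²}) such that P ρ(g) P⁻¹ ∈ GU_N(q) for all g ∈ G. -/

import Mathlib

section FieldPart

variable {F : Type*} [Field F] [Fintype F] {q : ℕ}

lemma aux_q2 (hcard : Fintype.card F = q ^ 2) : 2 ≤ q := by
  have h1 : 1 < q ^ 2 := hcard ▸ Fintype.one_lt_card
  by_contra h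
  nlinarith

lemma aux_frob_add (hcard : Fintype.card F = q ^ 2) (x y : F) :
    (x + y) ^ q = x ^ q + y ^ q := by
  have hq2 := aux_q2 hcard
  set p := ringChar F with hpdef
  haveI : CharP F p := ringChar.charP F
  obtain ⟨n, hp, hc⟩ := FiniteField.card F p
  haveI : Fact p.Prime := ⟨hp⟩
  have hqd : q ∣ p ^ (n : ℕ) := ⟨q, by rw [← hc, hcard, sq]⟩
  obtain ⟨m, -, rfl⟩ := (Nat.dvd_prime_pow hp).mp hqd
  exact add_pow_char_pow x y _ _

/-- generator-based lifting lemma -/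
lemma aux_pow_lift (hcard : Fintype.card F = q ^ 2) (d e : ℕ) (hde : q ^ 2 - 1 = d * e)
    (u : Fˣ) (hu : u ^ d = 1) : ∃ μ : Fˣ, μ ^ e = u := by
  have hq2 := aux_q2 hcard
  classical
  obtain ⟨ζ, hζ⟩ := IsCyclic.exists_generator (α := Fˣ)
  have horder : orderOf ζ = q ^ 2 - 1 := by
    rw [orderOf_eq_card_of_forall_mem_zpowers hζ, Nat.card_eq_fintype_card, Fintype.card_units, hcard]
  obtain ⟨k, rfl⟩ : ∃ k : ℕ, ζ ^ k = u := mem_powers_iff_mem_zpowers.mpr (hζ u)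
  have hdvd : (d * e) ∣ k * d := by
    rw [← hde, ← horder]
    exact orderOf_dvd_of_pow_eq_one (by rw [pow_mul]; exact hu)
  have hd0 : 0 < d := by
    rcases Nat.eq_zero_or_pos d with h | h
    · subst h; simp at hde; have h4 : 4 ≤ q ^ 2 := by nlinarith
      omega
    · exact h
  have hek : e ∣ k := by
    have : d * e ∣ d * k := by rwa [mul_comm k d] at hdvd
    exact (Nat.mul_dvd_mul_iff_left hd0).mp this
  obtain ⟨j, rfl⟩ := hek
  exact ⟨ζ ^ j, by rw [← pow_mul, mul_comm]⟩

lemma aux_eps_frob (hcard : Fintype.card F = q ^ 2) (ε : F ≃+* F)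
    (hinv : Function.Involutive ε) (hfix : ∀ x : F, ε x = x ↔ x ^ q = x) (x : F) :
    ε x = x ^ q := by
  have hq2 := aux_q2 hcard
  classical
  obtain ⟨ζ, hζ⟩ := IsCyclic.exists_generator (α := Fˣ)
  have horder : orderOf ζ = q ^ 2 - 1 := by
    rw [orderOf_eq_card_of_forall_mem_zpowers hζ, Nat.card_eq_fintype_card, Fintype.card_units, hcard]
  -- ζ^q ≠ ζ
  have hζq : ((ζ : F)) ^ q ≠ (ζ : F) := by
    intro h
    have h1 : ζ ^ q = ζ := Units.ext (by push_cast; exact h)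
    have h2 : ζ ^ (q - 1) = 1 := by
      have h3 : ζ ^ (q - 1) * ζ = 1 * ζ := by
        rw [← pow_succ, Nat.sub_add_cancel (by omega), one_mul]
        exact h1
      exact mul_right_cancel h3
    have := orderOf_dvd_of_pow_eq_one h2
    rw [horder] at this
    have := Nat.le_of_dvd (by omega) this
    have h5 : q < q ^ 2 := by nlinarith
    omega
  -- key computation
  have hεζ : ε (ζ : F) = (ζ : F) ^ q := by
    set z : F := (ζ : F)
    have hs : (z + ε z) ^ q = z + ε z := by
      rw [← hfix]; rw [map_add, hinv z, add_comm]
    have hn : (z * ε z) ^ q = z * ε z := by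
      rw [← hfix]; rw [map_mul, hinv z, mul_comm]
    have hroot : z ^ 2 + z * ε z = (z + ε z) * z := by ring
    have hq' : (z ^ 2 + z * ε z) ^ q = (z ^ 2) ^ q + z * ε z := by
      rw [aux_frob_add hcard, hn]
    have h2 : (z ^ q) ^ 2 + z * ε z = (z + ε z) * z ^ q := by
      have := congrArg (· ^ q) hroot
      rw [hq'] at this
      rw [mul_pow] at this
      rw [← pow_mul, mul_comm 2 q, pow_mul] at this
      rw [this, hs]
    have hfactor : (z ^ q - z) * (z ^ q - ε z) = 0 := by linear_combination h2
    rcases mul_eq_zero.mp hfactor with h | h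
    · exact absurd (sub_eq_zero.mp h) hζq
    · exact (sub_eq_zero.mp h).symm
  -- extend to all x
  rcases eq_or_ne x 0 with rfl | hx
  · rw [map_zero, zero_pow (by omega)]
  · lift x to Fˣ using isUnit_iff_ne_zero.mpr hx with xu
    obtain ⟨k, rfl⟩ : ∃ k : ℕ, ζ ^ k = xu := mem_powers_iff_mem_zpowers.mpr (hζ xu)
    push_cast
    rw [map_pow, hεζ, ← pow_mul, mul_comm, pow_mul]

end FieldPart

section Cors
variable {F : Type*} [Field F] [Fintype F] {q : ℕ}
  (hcard : Fintype.card F = q ^ 2) (ε : F ≃+* F)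
  (hinv : Function.Involutive ε) (hfix : ∀ x : F, ε x = x ↔ x ^ q = x)

include hcard hinv hfix

lemma aux_fact : (q + 1) * (q - 1) = q ^ 2 - 1 := by
  have hq2 := aux_q2 hcard
  obtain ⟨r, rfl⟩ : ∃ r, q = r + 2 := ⟨q - 2, by omega⟩
  have e1 : r + 2 - 1 = r + 1 := by omega
  rw [e1]
  have h : (r + 2) ^ 2 = (r + 2 + 1) * (r + 1) + 1 := by ring
  omega

lemma aux_H90 (c : F) (hc : ε c * c = 1) : ∃ μ : F, μ ≠ 0 ∧ ε μ = μ * c := by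
  classical
  have hq2 := aux_q2 hcard
  have hc0 : c ≠ 0 := by intro h; rw [h, mul_zero] at hc; exact one_ne_zero hc.symm
  lift c to Fˣ using isUnit_iff_ne_zero.mpr hc0
  have hcu : c ^ (q + 1) = 1 := by
    apply Units.ext
    push_cast
    rw [pow_succ, ← aux_eps_frob hcard ε hinv hfix]
    exact hc
  obtain ⟨μ, hμ⟩ := aux_pow_lift hcard (q + 1) (q - 1) (aux_fact hcard ε hinv hfix).symm c hcu
  refine ⟨μ, Units.ne_zero μ, ?_⟩
  rw [aux_eps_frob hcard ε hinv hfix]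
  have : (μ : F) ^ (q - 1) = c := by rw [← hμ]; push_cast; ring
  have hq1 : q - 1 + 1 = q := by omega
  calc (μ : F) ^ q = μ ^ (q - 1 + 1) := by rw [hq1]
    _ = μ * μ ^ (q - 1) := by rw [pow_succ']
    _ = μ * c := by rw [this]

lemma aux_norm (a : F) (ha0 : a ≠ 0) (hfa : ε a = a) : ∃ c : F, c ≠ 0 ∧ ε c * c = a := by
  classical
  have hq2 := aux_q2 hcard
  lift a to Fˣ using isUnit_iff_ne_zero.mpr ha0
  have hau : a ^ (q - 1) = 1 := by
    have haq : (a : F) ^ q = a := (hfix a).mp hfa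
    apply Units.ext
    push_cast
    have hq1 : q - 1 + 1 = q := by omega
    have h1 : (a : F) ^ (q - 1) * a = 1 * a := by
      rw [← pow_succ, hq1, one_mul]
      exact haq
    exact mul_right_cancel₀ (Units.ne_zero a) h1
  have hde : q ^ 2 - 1 = (q - 1) * (q + 1) := by
    rw [mul_comm]; exact (aux_fact hcard ε hinv hfix).symm
  obtain ⟨c, hc⟩ := aux_pow_lift hcard (q - 1) (q + 1) hde a hau
  refine ⟨c, Units.ne_zero c, ?_⟩
  rw [aux_eps_frob hcard ε hinv hfix]
  rw [← pow_succ]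
  rw [← hc]; push_cast; ring

end Cors

section Herm

open Matrix

variable {F : Type*} [Field F] [StarRing F]

lemma aux_split {M : Type*} [AddCommMonoid M] {ι : Type*} [Fintype ι] [DecidableEq ι]
    (i0 : ι) (f : ι → M) :
    ∑ k, f k = f i0 + ∑ k : {j : ι // j ≠ i0}, f (k : ι) := by
  rw [← Finset.sum_subtype (Finset.univ.erase i0)
    (fun x => by simp [Finset.mem_erase]) f]
  exact (Finset.add_sum_erase _ f (Finset.mem_univ i0)).symm

lemma aux_entry {ι : Type*} [Fintype ι] (J A : Matrix ι ι F) (i j : ι) :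
    (Aᴴ * J * A) i j =
      dotProduct (star (fun a => A a i)) (J.mulVec (fun b => A b j)) := by
  simp only [Matrix.mul_apply, Matrix.mulVec, dotProduct, Matrix.conjTranspose_apply,
    Finset.sum_mul, Finset.mul_sum, Pi.star_apply]
  rw [Finset.sum_comm]
  refine Finset.sum_congr rfl fun a _ => Finset.sum_congr rfl fun b _ => by ring

lemma aux_swap {ι : Type*} [Fintype ι] {J : Matrix ι ι F} (hJ : Jᴴ = J) (x y : ι → F) :
    star (dotProduct (star x) (J.mulVec y)) =
      dotProduct (star y) (J.mulVec x) := by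
  have hJ' : ∀ i j, star (J i j) = J j i := fun i j => by
    conv_rhs => rw [← hJ]
    simp [Matrix.conjTranspose_apply]
  simp only [dotProduct, Matrix.mulVec, dotProduct, star_sum, star_mul',
    Finset.mul_sum, Finset.sum_mul, Pi.star_apply, star_star]
  rw [Finset.sum_comm]
  refine Finset.sum_congr rfl fun a _ => Finset.sum_congr rfl fun b _ => ?_
  rw [hJ' b a]
  ring

lemma aux_dot_single {ι : Type*} [Fintype ι] [DecidableEq ι] (J : Matrix ι ι F)
    (i j : ι) (r s : F) :
    dotProduct (star (Pi.single i r)) (J.mulVec (Pi.single j s)) =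
      star r * (J i j * s) := by
  rw [← Pi.single_star, Matrix.mulVec_single]
  rw [single_dotProduct]
  rfl

def mext {ι : Type*} [DecidableEq ι] (i0 : ι)
    (A : Matrix {j : ι // j ≠ i0} {j : ι // j ≠ i0} F) : Matrix ι ι F :=
  Matrix.of fun a b =>
    if ha : a = i0 then (if b = i0 then 1 else 0)
    else if hb : b = i0 then 0 else A ⟨a, ha⟩ ⟨b, hb⟩

lemma mext_one {ι : Type*} [DecidableEq ι] (i0 : ι) :
    (mext i0 (1 : Matrix {j : ι // j ≠ i0} {j : ι // j ≠ i0} F)) = 1 := by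
  ext a b
  by_cases ha : a = i0 <;> by_cases hb : b = i0 <;>
    simp [mext, ha, hb, Matrix.one_apply, Subtype.ext_iff] <;> aesop

lemma mext_conjTranspose {ι : Type*} [DecidableEq ι] (i0 : ι)
    (A : Matrix {j : ι // j ≠ i0} {j : ι // j ≠ i0} F) :
    (mext i0 A)ᴴ = mext i0 Aᴴ := by
  ext a b
  by_cases ha : a = i0 <;> by_cases hb : b = i0 <;>
    simp only [mext, Matrix.conjTranspose_apply, Matrix.of_apply, dif_pos, dif_neg, ha, hb,
      star_one, star_zero, dite_eq_ite, if_pos, if_neg, not_false_iff] <;>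
    first
      | rfl
      | (rw [dif_pos ha, dif_pos hb]; simp)
      | (rw [dif_pos ha]; rw [dif_pos hb])
      | (rw [dif_neg ha, dif_neg hb]; rfl)
      | skip

lemma mext_mul {ι : Type*} [Fintype ι] [DecidableEq ι] (i0 : ι)
    (A B : Matrix {j : ι // j ≠ i0} {j : ι // j ≠ i0} F) :
    mext i0 A * mext i0 B = mext i0 (A * B) := by
  ext a b
  rw [Matrix.mul_apply, aux_split i0]
  have h1 : ∀ k : {j : ι // j ≠ i0}, mext i0 A i0 (k : ι) = 0 := fun k => by
    simp [mext, k.2]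
  have h2 : ∀ k : {j : ι // j ≠ i0}, mext i0 B (k : ι) i0 = 0 := fun k => by
    simp [mext, k.2]
  by_cases ha : a = i0 <;> by_cases hb : b = i0
  · subst ha; subst hb
    rw [Finset.sum_congr rfl fun k _ => by rw [h1 k, zero_mul]]
    simp [mext]
  · subst ha
    rw [Finset.sum_congr rfl fun k _ => by rw [h1 k, zero_mul]]
    simp [mext, hb]
  · subst hb
    rw [Finset.sum_congr rfl fun k _ => by rw [h2 k, mul_zero]]
    simp [mext, ha]
  · have hterm : ∀ k : {j : ι // j ≠ i0},
        mext i0 A a (k : ι) * mext i0 B (k : ι) b = A ⟨a, ha⟩ k * B k ⟨b, hb⟩ := fun k => by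
      simp [mext, ha, hb, k.2]
    rw [Finset.sum_congr rfl fun k _ => hterm k]
    simp [mext, ha, hb, Matrix.mul_apply]

end Herm

section HermMain

open Matrix

variable {F : Type*} [Field F] [StarRing F]

lemma aux_cong_nd {ι : Type*} [Fintype ι] [DecidableEq ι] (J A : Matrix ι ι F)
    (hA : IsUnit A.det) (hnd : ∀ x : ι → F, J.mulVec x = 0 → x = 0) :
    ∀ x : ι → F, (Aᴴ * J * A).mulVec x = 0 → x = 0 := by
  intro x hx
  have hAH : IsUnit (Aᴴ).det := by
    rw [Matrix.det_conjTranspose]; exact hA.star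
  rw [Matrix.mul_assoc, ← Matrix.mulVec_mulVec] at hx
  have h1 : (J * A).mulVec x = 0 := by
    have h := congrArg (fun v => (Aᴴ)⁻¹.mulVec v) hx
    simpa [Matrix.mulVec_mulVec, ← Matrix.mul_assoc, Matrix.nonsing_inv_mul _ hAH,
      Matrix.one_mulVec, Matrix.mulVec_zero] using h
  rw [← Matrix.mulVec_mulVec] at h1
  have h2 : A.mulVec x = 0 := hnd _ h1
  have h := congrArg (fun v => A⁻¹.mulVec v) h2
  simpa [Matrix.mulVec_mulVec, ← Matrix.mul_assoc, Matrix.nonsing_inv_mul _ hA,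
    Matrix.one_mulVec, Matrix.mulVec_zero] using h

lemma mext_apply_ne {ι : Type*} [DecidableEq ι] (i0 : ι)
    (A : Matrix {j : ι // j ≠ i0} {j : ι // j ≠ i0} F) (i' j' : {j : ι // j ≠ i0}) :
    mext i0 A (i' : ι) (j' : ι) = A i' j' := by
  simp [mext, i'.2, j'.2]

lemma aux_herm_main (hsurj : ∀ a : F, a ≠ 0 → star a = a → ∃ c : F, c ≠ 0 ∧ star c * c = a)
    (c₀ : F) (hc₀ : star c₀ ≠ c₀) :
    ∀ (n : ℕ) (ι : Type) [Fintype ι] [DecidableEq ι], Fintype.card ι = n →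
      ∀ J : Matrix ι ι F, Jᴴ = J → (∀ x : ι → F, J.mulVec x = 0 → x = 0) →
      ∃ C : Matrix ι ι F, Cᴴ * J * C = 1 := by
  intro n
  induction n with
  | zero =>
    intro ι _ _ hcard J hJ hnd
    haveI : IsEmpty ι := Fintype.card_eq_zero_iff.mp hcard
    exact ⟨1, Subsingleton.elim _ _⟩
  | succ n ih =>
    intro ι _ _ hcard J hJ hnd
    haveI : Nonempty ι := Fintype.card_pos_iff.mp (by omega)
    have hJ' : ∀ i j, star (J i j) = J j i := fun i j =>
      (congrFun (congrFun hJ j) i : Jᴴ j i = J j i)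
    -- Step 1 : find v with B v v ≠ 0
    have hex : ∃ v : ι → F, dotProduct (star v) (J.mulVec v) ≠ 0 := by
      by_contra hcon
      push_neg at hcon
      have h1 : ∀ x y : ι → F,
          dotProduct (star x) (J.mulVec y)
            + dotProduct (star y) (J.mulVec x) = 0 := by
        intro x y
        have h := hcon (x + y)
        simp only [star_add, Matrix.mulVec_add, add_dotProduct,
          dotProduct_add] at h
        have hx := hcon x
        have hy := hcon y
        linear_combination h - hx - hy
      have h2 : ∀ x y : ι → F, dotProduct (star y) (J.mulVec x) = 0 := by
        intro x y
        have h := hcon (x + c₀ • y)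
        simp only [star_add, star_smul, Matrix.mulVec_add, Matrix.mulVec_smul,
          add_dotProduct, dotProduct_add, smul_dotProduct,
          dotProduct_smul, smul_eq_mul, star_smul] at h
        have hx := hcon x
        have hy := hcon y
        have h3 : (star c₀ - c₀) * dotProduct (star y) (J.mulVec x) = 0 := by
          linear_combination h - hx - c₀ * star c₀ * hy - c₀ * (h1 x y)
        rcases mul_eq_zero.mp h3 with h4 | h4
        · exact absurd (sub_eq_zero.mp h4) hc₀
        · exact h4
      have hJ0 : J = 0 := by
        ext i j
        have := h2 (Pi.single j 1) (Pi.single i 1)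
        rw [aux_dot_single] at this
        simpa using this
      obtain ⟨i0⟩ := ‹Nonempty ι›
      have h0 : (Pi.single i0 1 : ι → F) = 0 :=
        hnd _ (by rw [hJ0, Matrix.zero_mulVec])
      have := congrFun h0 i0
      simp at this
    obtain ⟨v, hv⟩ := hex
    have hfix_a : star (dotProduct (star v) (J.mulVec v))
        = dotProduct (star v) (J.mulVec v) := aux_swap hJ v v
    obtain ⟨c, hc0, hcc⟩ := hsurj _ hv hfix_a
    set w : ι → F := c⁻¹ • v with hwdef
    have hw : dotProduct (star w) (J.mulVec w) = 1 := by
      have hsc : star c ≠ 0 := star_ne_zero.mpr hc0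
      rw [hwdef]
      simp only [star_smul, Matrix.mulVec_smul, smul_dotProduct,
        dotProduct_smul, smul_eq_mul, star_inv₀]
      rw [← hcc]
      field_simp
    obtain ⟨i0, hi0⟩ : ∃ i0, w i0 ≠ 0 := by
      by_contra hcw
      push_neg at hcw
      have : w = 0 := funext hcw
      rw [this] at hw
      simp [dotProduct] at hw
    -- T
    set T : Matrix ι ι F := (1 : Matrix ι ι F).updateCol i0 w with hTdef
    have hdT : T.det = w i0 := by
      rw [hTdef, ← Matrix.cramer_apply, Matrix.cramer_one]; rfl
    have hTu : IsUnit T.det := isUnit_iff_ne_zero.mpr (by rw [hdT]; exact hi0)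
    set J₂ : Matrix ι ι F := Tᴴ * J * T with hJ₂def
    have hJ₂herm : J₂ᴴ = J₂ := by
      rw [hJ₂def]
      simp only [Matrix.conjTranspose_mul, Matrix.conjTranspose_conjTranspose, hJ]
      rw [Matrix.mul_assoc]
    have hJ₂nd : ∀ x : ι → F, J₂.mulVec x = 0 → x = 0 := aux_cong_nd J T hTu hnd
    have hJ₂' : ∀ i j, star (J₂ i j) = J₂ j i := fun i j =>
      (congrFun (congrFun hJ₂herm j) i : J₂ᴴ j i = J₂ j i)
    have hcolT : (fun a => T a i0) = w := by
      funext a; rw [hTdef]; simp [Matrix.updateCol_self]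
    have hJ₂00 : J₂ i0 i0 = 1 := by
      rw [hJ₂def, aux_entry, hcolT, hw]
    -- S
    set u : ι → F := fun j => if j = i0 then 1 else -(J₂ i0 j) with hudef
    set S : Matrix ι ι F := (1 : Matrix ι ι F).updateRow i0 u with hSdef
    have hdS : S.det = 1 := by
      have h1 : S = ((1 : Matrix ι ι F).updateCol i0 u)ᵀ := by
        rw [hSdef, ← Matrix.updateRow_transpose, Matrix.transpose_one]
      rw [h1, Matrix.det_transpose, ← Matrix.cramer_apply, Matrix.cramer_one]
      simp [hudef]
    have hSu : IsUnit S.det := by rw [hdS]; exact isUnit_one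
    set J₃ : Matrix ι ι F := Sᴴ * J₂ * S with hJ₃def
    have hJ₃nd : ∀ x : ι → F, J₃.mulVec x = 0 → x = 0 := aux_cong_nd J₂ S hSu hJ₂nd
    -- the reduced matrix
    set J' : Matrix {j : ι // j ≠ i0} {j : ι // j ≠ i0} F :=
      Matrix.of (fun i' j' => J₂ (i' : ι) (j' : ι) - J₂ (i' : ι) i0 * J₂ i0 (j' : ι))
      with hJ'def
    have hcolS0 : (fun k => S k i0) = Pi.single i0 (1 : F) := by
      funext k
      by_cases hk : k = i0
      · rw [hSdef, hk]
        simp [Matrix.updateRow_self, hudef]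
      · rw [hSdef]
        simp [Matrix.updateRow_ne hk, Matrix.one_apply, hk, Pi.single_apply]
    have hcolSne : ∀ j, j ≠ i0 → (fun k => S k j)
        = Pi.single i0 (u j) + Pi.single j (1 : F) := by
      intro j hj
      funext k
      by_cases hk : k = i0
      · rw [hSdef, hk]
        simp only [Matrix.updateRow_self, Pi.add_apply, Pi.single_eq_same,
          Pi.single_apply]
        rw [if_neg (Ne.symm hj), add_zero]
      · rw [hSdef]
        simp only [Matrix.updateRow_ne hk, Pi.add_apply, Pi.single_apply,
          Matrix.one_apply]
        rw [if_neg hk, zero_add]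
    have hK : J₃ = mext i0 J' := by
      ext a b
      rw [hJ₃def, aux_entry]
      by_cases ha : a = i0 <;> by_cases hb : b = i0
      · rw [ha, hb, hcolS0, aux_dot_single]
        simp [mext, hudef, hJ₂00]
      · rw [ha, hcolS0, hcolSne b hb, Matrix.mulVec_add, dotProduct_add,
          aux_dot_single, aux_dot_single]
        simp only [mext, Matrix.of_apply, dif_pos rfl, if_neg hb, eq_self_iff_true, dite_true]
        simp only [hudef, if_neg hb, star_one, hJ₂00]
        ring
      · rw [hb, hcolS0, hcolSne a ha, star_add, add_dotProduct,
          aux_dot_single, aux_dot_single]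
        simp only [mext, Matrix.of_apply, dif_neg ha, dif_pos rfl, eq_self_iff_true, dite_true]
        simp only [hudef, if_neg ha, star_one, star_neg, hJ₂00, hJ₂' i0 a]
        ring
      · rw [hcolSne a ha, hcolSne b hb, star_add, Matrix.mulVec_add,
          add_dotProduct, dotProduct_add,
          dotProduct_add, aux_dot_single, aux_dot_single, aux_dot_single,
          aux_dot_single]
        simp only [mext, Matrix.of_apply, dif_neg ha, dif_neg hb, hJ'def]
        simp only [hudef, if_neg ha, if_neg hb, star_one, star_neg, hJ₂00, hJ₂' i0 a]
        ring
    have hJ'herm : J'ᴴ = J' := by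
      have h := congrArg Matrix.conjTranspose hK
      rw [mext_conjTranspose] at h
      have h2 : J₃ᴴ = J₃ := by
        rw [hJ₃def, Matrix.conjTranspose_mul, Matrix.conjTranspose_mul,
          Matrix.conjTranspose_conjTranspose, hJ₂herm, ← Matrix.mul_assoc]
      rw [h2, hK] at h
      ext i' j'
      have h3 := congrFun (congrFun h (i' : ι)) (j' : ι)
      rw [mext_apply_ne i0 J'ᴴ i' j', mext_apply_ne i0 J' i' j'] at h3
      exact h3.symm
    have hJ'nd : ∀ x : {j : ι // j ≠ i0} → F, J'.mulVec x = 0 → x = 0 := by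
      intro x hx
      set xe : ι → F := fun a => if ha : a = i0 then 0 else x ⟨a, ha⟩ with hxedef
      have hxe : J₃.mulVec xe = 0 := by
        funext a
        rw [hK]
        simp only [Matrix.mulVec, dotProduct]
        rw [aux_split i0]
        by_cases ha : a = i0
        · rw [ha]
          have hz : ∀ k : {j : ι // j ≠ i0}, mext i0 J' i0 (k : ι) * xe (k : ι) = 0 :=
            fun k => by simp [mext, k.2]
          rw [Finset.sum_congr rfl fun k _ => hz k]
          simp [mext, hxedef]
        · have hz : ∀ k : {j : ι // j ≠ i0}, mext i0 J' a (k : ι) * xe (k : ι)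
              = J' ⟨a, ha⟩ k * x k := fun k => by
            rw [mext_apply_ne i0 J' ⟨a, ha⟩ k]
            congr 1
            simp [hxedef, k.2]
          rw [Finset.sum_congr rfl fun k _ => hz k]
          have h0 : mext i0 J' a i0 * xe i0 = 0 := by simp [hxedef]
          rw [h0, zero_add]
          have := congrFun hx ⟨a, ha⟩
          simpa [Matrix.mulVec, dotProduct] using this
      have := hJ₃nd xe hxe
      funext k
      have h := congrFun this (k : ι)
      simpa [hxedef, k.2] using h
    -- apply induction hypothesis
    have hcard' : Fintype.card {j : ι // j ≠ i0} = n := by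
      have h1 : Fintype.card {j : ι // j ≠ i0}
          = Fintype.card ι - Fintype.card {j : ι // j = i0} :=
        Fintype.card_subtype_compl _
      rw [Fintype.card_subtype_eq] at h1
      omega
    obtain ⟨C', hC'⟩ := ih {j : ι // j ≠ i0} hcard' J' hJ'herm hJ'nd
    set X : Matrix ι ι F := mext i0 C' with hXdef
    refine ⟨T * (S * X), ?_⟩
    have hmid : Sᴴ * (J₂ * S) = mext i0 J' := by
      rw [← Matrix.mul_assoc, ← hJ₃def, hK]
    calc (T * (S * X))ᴴ * J * (T * (S * X))
        = Xᴴ * (Sᴴ * (Tᴴ * (J * (T * (S * X))))) := by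
          simp only [Matrix.conjTranspose_mul, Matrix.mul_assoc]
      _ = Xᴴ * (Sᴴ * (J₂ * (S * X))) := by
          rw [hJ₂def]; simp only [Matrix.mul_assoc]
      _ = Xᴴ * (Sᴴ * (J₂ * S) * X) := by simp only [Matrix.mul_assoc]
      _ = Xᴴ * (mext i0 J' * X) := by rw [hmid]
      _ = mext i0 (C'ᴴ * J' * C') := by
          rw [hXdef, mext_conjTranspose, mext_mul, mext_mul, Matrix.mul_assoc]
      _ = 1 := by rw [hC', mext_one]

end HermMain

open Matrix

/-- Let `G` be a group and `ρ : G → GL_N(F_{q²})` an absolutely irreducible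
representation (expressed via Burnside's criterion: the image spans the full matrix algebra)
such that `ε ∘ ρ*` is isomorphic to `ρ`, where `ρ*(g) = ᵗρ(g⁻¹)` is the contragredient and
`ε` is the order-2 automorphism of `F_{q²}` over `F_q` applied entrywise. Then there is
`P ∈ GL_N(F_{q²})` with `P ρ(g) P⁻¹ ∈ GU_N(q)` for all `g ∈ G`, where `GU_N(q)` is taken with
respect to the standard hermitian form (all nondegenerate hermitian forms being equivalent). -/
theorem stmt_4 {F : Type*} [Field F] [Fintype F] {q : ℕ} (hcard : Fintype.card F = q ^ 2)
    (ε : F ≃+* F) (hinv : Function.Involutive ε) (hne : ε ≠ RingEquiv.refl F)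
    (hfix : ∀ x : F, ε x = x ↔ x ^ q = x)
    {G : Type*} [Group G] {N : ℕ} (hN : 0 < N) (ρ : G →* GL (Fin N) F)
    (hirr : Algebra.adjoin F
      {M : Matrix (Fin N) (Fin N) F | ∃ g : G, (ρ g : Matrix (Fin N) (Fin N) F) = M} = ⊤)
    (hdual : ∃ Q : GL (Fin N) F, ∀ g : G,
      ((Q * ρ g * Q⁻¹ : GL (Fin N) F) : Matrix (Fin N) (Fin N) F) =
        (((ρ g⁻¹ : GL (Fin N) F) : Matrix (Fin N) (Fin N) F).transpose).map ε) :
    ∃ P : GL (Fin N) F, ∀ g : G,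
      ((((P * ρ g * P⁻¹ : GL (Fin N) F) : Matrix (Fin N) (Fin N) F).map ε).transpose) *
        ((P * ρ g * P⁻¹ : GL (Fin N) F) : Matrix (Fin N) (Fin N) F) = 1 := by
  classical
  letI instSR : StarRing F :=
    { star := fun x => ε x
      star_involutive := hinv
      star_mul := fun x y => by
        show ε (x * y) = ε y * ε x
        rw [_root_.map_mul]; ring
      star_add := fun x y => _root_.map_add ε x y }
  have hstar : ∀ x : F, star x = ε x := fun _ => rfl
  -- conversion between the (map ε).transpose forms and conjTranspose
  have hmapT : ∀ A : Matrix (Fin N) (Fin N) F, (A.map ⇑ε).transpose = Aᴴ := by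
    intro A; ext i j
    simp [Matrix.conjTranspose_apply, Matrix.transpose_apply, Matrix.map_apply, hstar]
  have hTmap : ∀ A : Matrix (Fin N) (Fin N) F, (A.transpose).map ⇑ε = Aᴴ := by
    intro A; ext i j
    simp [Matrix.conjTranspose_apply, Matrix.transpose_apply, Matrix.map_apply, hstar]
  obtain ⟨Q, hQ⟩ := hdual
  set r : G → Matrix (Fin N) (Fin N) F := fun g => ((ρ g : GL (Fin N) F) : Matrix (Fin N) (Fin N) F)
    with hrdef
  set Qm : Matrix (Fin N) (Fin N) F := (Q : Matrix (Fin N) (Fin N) F) with hQmdef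
  have hQdet : IsUnit Qm.det := (Matrix.isUnit_iff_isUnit_det Qm).mp ⟨Q, rfl⟩
  have hQinv : ((Q⁻¹ : GL (Fin N) F) : Matrix (Fin N) (Fin N) F) = Qm⁻¹ :=
    Matrix.coe_units_inv Q
  have hrdet : ∀ g, IsUnit (r g).det := fun g =>
    (Matrix.isUnit_iff_isUnit_det _).mp ⟨ρ g, rfl⟩
  have hrHdet : ∀ g, IsUnit ((r g)ᴴ).det := fun g => by
    rw [Matrix.det_conjTranspose]; exact (hrdet g).star
  have hQHdet : IsUnit (Qmᴴ).det := by
    rw [Matrix.det_conjTranspose]; exact hQdet.star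
  have hrinv : ∀ g : G, ((ρ g⁻¹ : GL (Fin N) F) : Matrix (Fin N) (Fin N) F) = (r g)⁻¹ := by
    intro g
    rw [map_inv]
    exact Matrix.coe_units_inv (ρ g)
  -- main relation
  have hrel : ∀ g : G, (r g)ᴴ * Qm * r g = Qm := by
    intro g
    have h := hQ g⁻¹
    rw [inv_inv, hTmap] at h
    have hL : ((Q * ρ g⁻¹ * Q⁻¹ : GL (Fin N) F) : Matrix (Fin N) (Fin N) F)
        = Qm * (r g)⁻¹ * Qm⁻¹ := by
      rw [Units.val_mul, Units.val_mul, hQinv, hrinv g]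
    rw [hL] at h
    rw [← h]
    simp only [Matrix.mul_assoc]
    rw [Matrix.nonsing_inv_mul_cancel_left _ _ hQdet,
      Matrix.nonsing_inv_mul _ (hrdet g), Matrix.mul_one]
  have hrelH : ∀ g : G, (r g)ᴴ * Qmᴴ * r g = Qmᴴ := by
    intro g
    have h := congrArg Matrix.conjTranspose (hrel g)
    rw [Matrix.conjTranspose_mul, Matrix.conjTranspose_mul,
      Matrix.conjTranspose_conjTranspose] at h
    rw [← Matrix.mul_assoc] at h
    exact h
  -- commutant element
  set Rm : Matrix (Fin N) (Fin N) F := Qmᴴ⁻¹ * Qm with hRmdef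
  have e1 : ∀ g, Qm * r g = ((r g)ᴴ)⁻¹ * Qm := by
    intro g
    calc Qm * r g = ((r g)ᴴ)⁻¹ * ((r g)ᴴ * (Qm * r g)) := by
          rw [Matrix.nonsing_inv_mul_cancel_left _ _ (hrHdet g)]
      _ = ((r g)ᴴ)⁻¹ * Qm := by rw [← Matrix.mul_assoc ((r g)ᴴ) Qm (r g), hrel g]
  have e2 : ∀ g, Qmᴴ * r g = ((r g)ᴴ)⁻¹ * Qmᴴ := by
    intro g
    calc Qmᴴ * r g = ((r g)ᴴ)⁻¹ * ((r g)ᴴ * (Qmᴴ * r g)) := by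
          rw [Matrix.nonsing_inv_mul_cancel_left _ _ (hrHdet g)]
      _ = ((r g)ᴴ)⁻¹ * Qmᴴ := by rw [← Matrix.mul_assoc ((r g)ᴴ) Qmᴴ (r g), hrelH g]
  have e2' : ∀ g, r g * Qmᴴ⁻¹ = Qmᴴ⁻¹ * ((r g)ᴴ)⁻¹ := by
    intro g
    calc r g * Qmᴴ⁻¹ = Qmᴴ⁻¹ * (Qmᴴ * r g) * Qmᴴ⁻¹ := by
          rw [Matrix.nonsing_inv_mul_cancel_left _ _ hQHdet]
      _ = Qmᴴ⁻¹ * (((r g)ᴴ)⁻¹ * Qmᴴ) * Qmᴴ⁻¹ := by rw [e2 g]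
      _ = Qmᴴ⁻¹ * ((r g)ᴴ)⁻¹ := by
          rw [← Matrix.mul_assoc Qmᴴ⁻¹ (((r g)ᴴ)⁻¹) Qmᴴ,
            Matrix.mul_nonsing_inv_cancel_right _ _ hQHdet]
  have hcomm : ∀ g, r g * Rm = Rm * r g := by
    intro g
    calc r g * (Qmᴴ⁻¹ * Qm) = (r g * Qmᴴ⁻¹) * Qm := by rw [Matrix.mul_assoc]
      _ = Qmᴴ⁻¹ * ((r g)ᴴ)⁻¹ * Qm := by rw [e2' g]
      _ = Qmᴴ⁻¹ * (((r g)ᴴ)⁻¹ * Qm) := by rw [Matrix.mul_assoc]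
      _ = Qmᴴ⁻¹ * (Qm * r g) := by rw [← e1 g]
      _ = Qmᴴ⁻¹ * Qm * r g := by rw [Matrix.mul_assoc]
  -- R is scalar
  have hcen : ∀ M : Matrix (Fin N) (Fin N) F, Rm * M = M * Rm := by
    intro M
    have hsub : {M : Matrix (Fin N) (Fin N) F | ∃ g : G, (ρ g : Matrix (Fin N) (Fin N) F) = M}
        ⊆ (Subalgebra.centralizer F ({Rm} : Set (Matrix (Fin N) (Fin N) F)) :
            Set (Matrix (Fin N) (Fin N) F)) := by
      rintro M ⟨g, rfl⟩
      rw [SetLike.mem_coe, Subalgebra.mem_centralizer_iff]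
      rintro y hy
      rw [Set.mem_singleton_iff] at hy
      subst hy
      exact (hcomm g).symm
    have hle := Algebra.adjoin_le hsub
    rw [hirr] at hle
    have hM : M ∈ Subalgebra.centralizer F ({Rm} : Set (Matrix (Fin N) (Fin N) F)) :=
      hle (Algebra.mem_top)
    rw [Subalgebra.mem_centralizer_iff] at hM
    exact hM Rm (Set.mem_singleton Rm)
  obtain ⟨cs, hcs⟩ : Rm ∈ Set.range (Matrix.scalar (Fin N)) :=
    Matrix.mem_range_scalar_of_commute_single
      (fun i j _ => (hcen (Matrix.single i j 1)).symm)
  -- Q = cs • Qᴴ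
  have hscalar1 : (Matrix.scalar (Fin N)) cs = cs • (1 : Matrix (Fin N) (Fin N) F) := by
    ext i j
    by_cases h : i = j <;>
      simp [Matrix.scalar_apply, Matrix.diagonal_apply, Matrix.one_apply, h]
  have hQcs : Qm = cs • Qmᴴ := by
    have h1 : Qmᴴ * Rm = Qm := Matrix.mul_nonsing_inv_cancel_left _ _ hQHdet
    calc Qm = Qmᴴ * Rm := h1.symm
      _ = Qmᴴ * (cs • (1 : Matrix (Fin N) (Fin N) F)) := by rw [← hscalar1, hcs]
      _ = cs • Qmᴴ := by rw [Matrix.mul_smul, Matrix.mul_one]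
  have hQH0 : Qmᴴ ≠ 0 := by
    intro h0
    rw [h0] at hQHdet
    haveI : Nonempty (Fin N) := ⟨⟨0, hN⟩⟩
    rw [Matrix.det_zero] at hQHdet
    exact (by simpa using hQHdet : False)
  have hcs1 : star cs * cs = 1 := by
    have h : Qmᴴ = star cs • Qm := by
      have h0 := congrArg Matrix.conjTranspose hQcs
      rwa [Matrix.conjTranspose_smul, Matrix.conjTranspose_conjTranspose] at h0
    have h2 : (star cs * cs - 1) • Qmᴴ = 0 := by
      rw [sub_smul, one_smul, ← smul_smul, ← hQcs, ← h, sub_self]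
    rcases smul_eq_zero.mp h2 with h3 | h3
    · exact sub_eq_zero.mp h3
    · exact absurd h3 hQH0
  have hcs0 : cs ≠ 0 := by
    intro h0
    rw [h0, mul_zero] at hcs1
    exact one_ne_zero hcs1.symm
  -- Hilbert 90 : get μ with ε μ = μ * cs
  obtain ⟨μ, hμ0, hμ⟩ := aux_H90 hcard ε hinv hfix cs (by rw [← hstar]; exact hcs1)
  set Jm : Matrix (Fin N) (Fin N) F := μ • Qm with hJmdef
  have hQmH : Qmᴴ = cs⁻¹ • Qm := by
    conv_rhs => rw [hQcs]
    rw [smul_smul, inv_mul_cancel₀ hcs0, one_smul]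
  have hJherm : Jmᴴ = Jm := by
    rw [hJmdef, Matrix.conjTranspose_smul, hQmH, smul_smul]
    have hsc : star μ * cs⁻¹ = μ := by
      rw [hstar, hμ]
      field_simp
    rw [hsc]
  have hJrel : ∀ g, (r g)ᴴ * Jm * r g = Jm := by
    intro g
    rw [hJmdef, Matrix.mul_smul, Matrix.smul_mul, hrel g]
  have hJnd : ∀ x : Fin N → F, Jm.mulVec x = 0 → x = 0 := by
    intro x hx
    rw [hJmdef, Matrix.smul_mulVec] at hx
    have hq : Qm.mulVec x = 0 := by
      rcases smul_eq_zero.mp hx with h | h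
      · exact absurd h hμ0
      · exact h
    have h := congrArg (fun v => Qm⁻¹.mulVec v) hq
    simpa [Matrix.mulVec_mulVec, ← Matrix.mul_assoc, Matrix.nonsing_inv_mul _ hQdet,
      Matrix.one_mulVec, Matrix.mulVec_zero] using h
  -- the hermitian decomposition
  have hsurj : ∀ a : F, a ≠ 0 → star a = a → ∃ c : F, c ≠ 0 ∧ star c * c = a := by
    intro a ha hfa
    obtain ⟨c, hc0, hcc⟩ := aux_norm hcard ε hinv hfix a ha (by rw [← hstar]; exact hfa)
    exact ⟨c, hc0, by rw [hstar]; exact hcc⟩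
  obtain ⟨c₀, hc₀⟩ : ∃ c₀ : F, star c₀ ≠ c₀ := by
    by_contra hcon
    push_neg at hcon
    exact hne (RingEquiv.ext fun x => by rw [RingEquiv.refl_apply, ← hstar x, hcon x])
  obtain ⟨C, hC⟩ := aux_herm_main hsurj c₀ hc₀ N (Fin N) (Fintype.card_fin N) Jm hJherm hJnd
  have hCdet : IsUnit C.det := by
    have hdet := congrArg Matrix.det hC
    rw [Matrix.det_mul, Matrix.det_one] at hdet
    exact IsUnit.of_mul_eq_one _ (by rw [mul_comm]; exact hdet)
  have hCHdet : IsUnit (Cᴴ).det := by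
    rw [Matrix.det_conjTranspose]; exact hCdet.star
  have hJfact : (Cᴴ)⁻¹ * C⁻¹ = Jm := by
    have h1 : (Cᴴ)⁻¹ * (Cᴴ * Jm * C) * C⁻¹ = (Cᴴ)⁻¹ * C⁻¹ := by
      rw [hC, Matrix.mul_one]
    rw [← h1, ← Matrix.mul_assoc, Matrix.nonsing_inv_mul_cancel_left _ _ hCHdet,
      Matrix.mul_nonsing_inv_cancel_right _ _ hCdet]
  -- build the GL element
  set Cu : GL (Fin N) F := ((Matrix.isUnit_iff_isUnit_det C).mpr hCdet).unit with hCudef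
  have hCuval : (Cu : Matrix (Fin N) (Fin N) F) = C := rfl
  refine ⟨Cu⁻¹, fun g => ?_⟩
  have hval : ((Cu⁻¹ * ρ g * (Cu⁻¹)⁻¹ : GL (Fin N) F) : Matrix (Fin N) (Fin N) F)
      = C⁻¹ * r g * C := by
    rw [Units.val_mul, Units.val_mul, inv_inv, hCuval]
    congr 1
    congr 1
    · exact Matrix.coe_units_inv Cu
  rw [hval, hmapT]
  calc (C⁻¹ * r g * C)ᴴ * (C⁻¹ * r g * C)
      = Cᴴ * ((r g)ᴴ * ((Cᴴ)⁻¹ * C⁻¹ * (r g * C))) := by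
        rw [Matrix.conjTranspose_mul, Matrix.conjTranspose_mul,
          Matrix.conjTranspose_nonsing_inv]
        simp only [Matrix.mul_assoc]
    _ = Cᴴ * ((r g)ᴴ * (Jm * (r g * C))) := by rw [hJfact]
    _ = Cᴴ * ((r g)ᴴ * Jm * r g * C) := by simp only [Matrix.mul_assoc]
    _ = Cᴴ * (Jm * C) := by rw [hJrel g]
    _ = Cᴴ * Jm * C := by rw [Matrix.mul_assoc]
    _ = 1 := hC
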